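/- In a finite Kripke structure M with n states, for any state s and CTL release formula A[φ V ψ]: M, s ⊨ A[φ V ψ] if and only if along every path of length n starting at s, either ψ holds at every state of the path, or there is a position k ≤ n such that ψ holds at all positions up to and including k and φ holds at position k. -/
import Mathlib


/-- An infinite path in the structure with transition relation R. -/
def IsPath {St : Type} (R : St → St → Prop) (π : ℕ → St) : Prop :=
  ∀ i, R (π i) (π (i + 1))

/-- M, s ⊨ A[φ V ψ]. -/
def SatAV {St : Type} (R : St → St → Prop) (φ ψ : St → Prop) (s : St) : Prop :=
  ∀ π : ℕ → St, π 0 = s → IsPath R π →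
    ∀ k, (∀ j < k, ¬ φ (π j)) → ψ (π k)

/-- Extend a finite path prefix (of length `n`) to an infinite path using totality. -/
noncomputable def extendPath {St : Type} (R : St → St → Prop) (total : ∀ s, ∃ t, R s t)
    (π : ℕ → St) (n : ℕ) : ℕ → St
  | 0 => π 0
  | i + 1 => if i + 1 ≤ n then π (i + 1) else Classical.choose (total (extendPath R total π n i))

lemma extendPath_eq {St : Type} (R : St → St → Prop) (total : ∀ s, ∃ t, R s t)
    (π : ℕ → St) (n : ℕ) : ∀ i, i ≤ n → extendPath R total π n i = π i := by
  intro i hi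
  cases i with
  | zero => rfl
  | succ j => simp [extendPath, hi]

lemma extendPath_isPath {St : Type} (R : St → St → Prop) (total : ∀ s, ∃ t, R s t)
    (π : ℕ → St) (n : ℕ) (h : ∀ i < n, R (π i) (π (i + 1))) :
    IsPath R (extendPath R total π n) := by
  intro i
  by_cases hi : i + 1 ≤ n
  · rw [extendPath_eq R total π n i (by omega), extendPath_eq R total π n (i + 1) hi]
    exact h i (by omega)
  · show R _ (extendPath R total π n (i + 1))
    rw [extendPath]
    simp only [hi, if_false]
    exact Classical.choose_spec (total _)

/-- Shortcut lemma: from any prefix of a path avoiding φ, we get a path avoiding φ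
    reaching the same state within `Fintype.card St` steps. -/
lemma shortcut {St : Type} [Fintype St] (R : St → St → Prop) (φ : St → Prop) :
    ∀ k, ∀ π : ℕ → St, IsPath R π → (∀ j < k, ¬ φ (π j)) →
      ∃ (σ : ℕ → St) (m : ℕ), m ≤ Fintype.card St ∧ IsPath R σ ∧ σ 0 = π 0 ∧
        σ m = π k ∧ ∀ j < m, ¬ φ (σ j) := by
  intro k
  induction k using Nat.strong_induction_on with
  | _ k ih =>
    intro π hπ hφ
    by_cases hk : k ≤ Fintype.card St
    · exact ⟨π, k, hk, hπ, rfl, rfl, hφ⟩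
    · push_neg at hk
      -- pigeonhole on positions 0..card St
      obtain ⟨a, b, hab, heq⟩ := Fintype.exists_ne_map_eq_of_card_lt
        (fun i : Fin (Fintype.card St + 1) => π i) (by simp)
      -- wlog a < b
      obtain ⟨i, j, hij, hjn, hpij⟩ : ∃ i j : ℕ, i < j ∧ j ≤ Fintype.card St ∧ π i = π j := by
        rcases lt_or_gt_of_ne (Fin.val_ne_of_ne hab) with h | h
        · exact ⟨a, b, h, by omega, heq⟩
        · exact ⟨b, a, h, by omega, heq.symm⟩
      set d := j - i with hd
      have hd0 : 0 < d := by omega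
      set π' : ℕ → St := fun t => if t ≤ i then π t else π (t + d) with hπ'
      have hstep : IsPath R π' := by
        intro t
        by_cases ht : t + 1 ≤ i
        · have ht2 : t ≤ i := by omega
          simpa [hπ', ht, ht2] using hπ t
        · by_cases ht2 : t ≤ i
          · have hti : t = i := by omega
            have e1 : π' t = π (t + d) := by
              simp only [hπ']
              rw [if_pos ht2, hti, hpij]
              congr 1
              omega
            have e2 : π' (t + 1) = π (t + d + 1) := by
              simp only [hπ']
              rw [if_neg ht]
              congr 1
              omega
            rw [e1, e2]
            exact hπ (t + d)
          · simp only [hπ', ht, ht2, if_neg, if_false]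
            have : t + 1 + d = t + d + 1 := by omega
            rw [this]
            exact hπ (t + d)
      have hkd : d ≤ k := by omega
      have hend : π' (k - d) = π k := by
        have h1 : ¬ (k - d ≤ i) := by omega
        simp only [hπ', h1, if_neg, if_false]
        congr 1
        omega
      have hφ' : ∀ t < k - d, ¬ φ (π' t) := by
        intro t ht
        by_cases h1 : t ≤ i
        · simpa [hπ', h1] using hφ t (by omega)
        · simpa [hπ', h1] using hφ (t + d) (by omega)
      obtain ⟨σ, m, hm, hσp, hσ0, hσm, hσφ⟩ := ih (k - d) (by omega) π' hstep hφ'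
      refine ⟨σ, m, hm, hσp, ?_, by rw [hσm, hend], hσφ⟩
      rw [hσ0]
      simp [hπ']

/-- In a finite total Kripke structure with n states, A[φ V ψ] holds at s iff
    along every path of length n from s, either ψ holds everywhere, or there is a
    position k ≤ n with ψ holding up to and including k and φ holding at k. -/
theorem AV_iff_finite_paths {St : Type} [Fintype St]
    (R : St → St → Prop) (total : ∀ s, ∃ t, R s t)
    (φ ψ : St → Prop) (s : St) :
    SatAV R φ ψ s ↔
      ∀ π : ℕ → St, π 0 = s → (∀ i < Fintype.card St, R (π i) (π (i + 1))) →
        ((∀ i ≤ Fintype.card St, ψ (π i)) ∨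
         (∃ k ≤ Fintype.card St, (∀ i ≤ k, ψ (π i)) ∧ φ (π k))) := by
  classical
  set n := Fintype.card St with hn
  constructor
  · intro hsat π hπ0 hedges
    set π' := extendPath R total π n with hπ'
    have heq : ∀ i, i ≤ n → π' i = π i := by
      rw [hπ']; exact extendPath_eq R total π n
    have hpath : IsPath R π' := extendPath_isPath R total π n hedges
    have h0 : π' 0 = s := by rw [heq 0 (Nat.zero_le _), hπ0]
    by_cases hφex : ∃ k, k ≤ n ∧ φ (π k)
    · -- take minimal such k
      set k0 := Nat.find hφex with hk0def
      obtain ⟨hk0n, hk0φ⟩ := Nat.find_spec hφex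
      have hmin : ∀ j < k0, ¬ (j ≤ n ∧ φ (π j)) := fun j hj => Nat.find_min hφex hj
      right
      refine ⟨k0, hk0n, ?_, hk0φ⟩
      intro i hi
      have : ψ (π' i) := by
        apply hsat π' h0 hpath
        intro j hj
        rw [heq j (by omega)]
        intro hc
        exact (hmin j (by omega)) ⟨by omega, hc⟩
      rwa [heq i (by omega)] at this
    · push_neg at hφex
      left
      intro i hi
      have : ψ (π' i) := by
        apply hsat π' h0 hpath
        intro j hj
        rw [heq j (by omega)]
        exact hφex j (by omega)
      rwa [heq i hi] at this
  · intro hfin π hπ0 hpath k hφk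
    obtain ⟨σ, m, hm, hσp, hσ0, hσm, hσφ⟩ := shortcut R φ k π hpath hφk
    -- extend σ beyond m with the tail of π
    set τ : ℕ → St := fun t => if t ≤ m then σ t else π (k + (t - m)) with hτ
    have hτpath : ∀ i < n, R (τ i) (τ (i + 1)) := by
      intro i _
      by_cases h1 : i + 1 ≤ m
      · have h2 : i ≤ m := by omega
        simpa [hτ, h1, h2] using hσp i
      · by_cases h2 : i ≤ m
        · have him : i = m := by omega
          have e1 : τ i = π k := by simp [hτ, h2, him, hσm]
          have e2 : τ (i + 1) = π (k + 1) := by simp [hτ, h1, him]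
          rw [e1, e2]; exact hpath k
        · have e1 : τ i = π (k + (i - m)) := by simp [hτ, h2]
          have e2 : τ (i + 1) = π (k + (i - m) + 1) := by
            simp only [hτ]
            rw [if_neg h1]
            congr 1
            omega
          rw [e1, e2]; exact hpath (k + (i - m))
    have hτ0 : τ 0 = s := by simp [hτ, hσ0, hπ0]
    have hτm : τ m = π k := by simp [hτ, hσm]
    rcases hfin τ hτ0 hτpath with h | ⟨k', hk', hψ, hφ'⟩
    · rw [← hτm]; exact h m hm
    · by_cases hc : m ≤ k'
      · rw [← hτm]; exact hψ m hc
      · exfalso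
        push_neg at hc
        have hc2 : k' ≤ m := by omega
        have : τ k' = σ k' := by simp [hτ, hc2]
        rw [this] at hφ'
        exact hσφ k' hc hφ'
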